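/- Every word over the alphabet of letters admits exactly one non-splitting reduction, up to permutation of adjacent commuting letters. -/

import Mathlib

variable {V : Type*} [DecidableEq V] [Fintype V]

/-- A letter is a nonempty connected subset of the graph `G`
(connectedness of the induced subgraph includes nonemptiness). -/
def IsLetter (G : SimpleGraph V) (s : Finset V) : Prop :=
  (G.induce (↑s : Set V)).Connected

/-- The type of letters of `G`. -/
def Letter (G : SimpleGraph V) := {s : Finset V // IsLetter G s}

/-- A word is a finite sequence of letters. -/
abbrev Word (G : SimpleGraph V) := List (Letter G)

/-- Two letters commute iff their union is not a letter (is disconnected). -/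
def LCommute (G : SimpleGraph V) (s t : Letter G) : Prop :=
  ¬ IsLetter G (s.1 ∪ t.1)

/-- Two words commute if their letters pairwise commute. -/
def WCommute (G : SimpleGraph V) (u v : Word G) : Prop :=
  ∀ s ∈ u, ∀ t ∈ v, LCommute G s t

/-- One swap of two adjacent commuting letters. -/
def LSwapStep (G : SimpleGraph V) (w w' : Word G) : Prop :=
  ∃ (a b : Word G) (s t : Letter G), LCommute G s t ∧
    w = a ++ s :: t :: b ∧ w' = a ++ t :: s :: b

/-- Equivalence (`≈`) of words: sequences of swaps of adjacent commuting letters. -/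
def WEquiv (G : SimpleGraph V) : Word G → Word G → Prop :=
  Relation.ReflTransGen (LSwapStep G)

/-- A word is reduced if there is no pair of comparable letters such that the
smaller one commutes with all letters strictly in between. -/
def WIsReduced (G : SimpleGraph V) (w : Word G) : Prop :=
  ¬ ∃ (a b c : Word G) (s t : Letter G),
      w = a ++ s :: (b ++ t :: c) ∧
      ((s.1 ⊆ t.1 ∧ ∀ r ∈ b, LCommute G s r) ∨
       (t.1 ⊆ s.1 ∧ ∀ r ∈ b, LCommute G t r))

/-- A splitting of a letter `s`: a (possibly empty) word whose letters are
proper subsets of `s`. -/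
def IsSplitting (G : SimpleGraph V) (x : Word G) (s : Letter G) : Prop :=
  ∀ t ∈ x, t.1 ⊂ s.1

/-- `SplitStep G u v`: `u` is obtained from `v` by replacing one occurrence of a
letter by a splitting of it. -/
def SplitStep (G : SimpleGraph V) (u v : Word G) : Prop :=
  ∃ (a b x : Word G) (s : Letter G),
    v = a ++ s :: b ∧ IsSplitting G x s ∧ u = a ++ x ++ b

/-- One step of the splitting order up to equivalence. -/
def PrecStep (G : SimpleGraph V) (u v : Word G) : Prop :=
  ∃ u' v', WEquiv G v v' ∧ SplitStep G u' v' ∧ WEquiv G u u'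

/-- The splitting order `≺` on words. -/
def WPrec (G : SimpleGraph V) : Word G → Word G → Prop :=
  Relation.TransGen (PrecStep G)

/-- `u ≼ v` : `u ≺ v` or `u ≈ v`. -/
def WPreceq (G : SimpleGraph V) (u v : Word G) : Prop :=
  WPrec G u v ∨ WEquiv G u v

/-- Absorption: if `s ⊆ t`, replace a subword `s·t` (or `t·s`) by `t`. -/
def AbsorbStep (G : SimpleGraph V) (w w' : Word G) : Prop :=
  ∃ (a b : Word G) (s t : Letter G), s.1 ⊆ t.1 ∧
    (w = a ++ s :: t :: b ∨ w = a ++ t :: s :: b) ∧ w' = a ++ t :: b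

/-- A non-splitting reduction step: Commutation or Absorption. -/
def NSStep (G : SimpleGraph V) (w w' : Word G) : Prop :=
  LSwapStep G w w' ∨ AbsorbStep G w w'

/-- `NSRed G u v`: `v` is a non-splitting reduction of `u`, i.e. a reduced word
obtained from `u` by Commutation and Absorption steps only. -/
def NSRed (G : SimpleGraph V) (u v : Word G) : Prop :=
  Relation.ReflTransGen (NSStep G) u v ∧ WIsReduced G v

/-- The letter `t` is left-absorbed by the word `w`: `t` is contained in some
letter of `w` and commutes with all earlier letters. -/
def LetterLeftAbsorbed (G : SimpleGraph V) (t : Letter G) (w : Word G) : Prop :=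
  ∃ (a b : Word G) (s : Letter G), w = a ++ s :: b ∧ t.1 ⊆ s.1 ∧ ∀ r ∈ a, LCommute G t r

/-- The letter `t` is right-absorbed by the word `w`. -/
def LetterRightAbsorbed (G : SimpleGraph V) (t : Letter G) (w : Word G) : Prop :=
  ∃ (a b : Word G) (s : Letter G), w = a ++ s :: b ∧ t.1 ⊆ s.1 ∧ ∀ r ∈ b, LCommute G t r

/-- The letter `t` is properly left-absorbed by the word `w`. -/
def LetterProperLeftAbsorbed (G : SimpleGraph V) (t : Letter G) (w : Word G) : Prop :=
  ∃ (a b : Word G) (s : Letter G), w = a ++ s :: b ∧ t.1 ⊂ s.1 ∧ ∀ r ∈ a, LCommute G t r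

/-- The letter `t` is properly right-absorbed by the word `w`. -/
def LetterProperRightAbsorbed (G : SimpleGraph V) (t : Letter G) (w : Word G) : Prop :=
  ∃ (a b : Word G) (s : Letter G), w = a ++ s :: b ∧ t.1 ⊂ s.1 ∧ ∀ r ∈ b, LCommute G t r

/-- A word `u` is left-absorbed by `w` if each of its letters is. -/
def LeftAbsorbed (G : SimpleGraph V) (u w : Word G) : Prop :=
  ∀ t ∈ u, LetterLeftAbsorbed G t w

/-- A word `u` is right-absorbed by `w` if each of its letters is. -/
def RightAbsorbed (G : SimpleGraph V) (u w : Word G) : Prop :=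
  ∀ t ∈ u, LetterRightAbsorbed G t w

/-- A word `u` is properly left-absorbed by `w` if each of its letters is. -/
def ProperLeftAbsorbed (G : SimpleGraph V) (u w : Word G) : Prop :=
  ∀ t ∈ u, LetterProperLeftAbsorbed G t w

/-- A word `u` is properly right-absorbed by `w` if each of its letters is. -/
def ProperRightAbsorbed (G : SimpleGraph V) (u w : Word G) : Prop :=
  ∀ t ∈ u, LetterProperRightAbsorbed G t w

/-- A commuting word: its letters pairwise commute. -/
def IsCommuting (G : SimpleGraph V) (u : Word G) : Prop :=
  List.Pairwise (LCommute G) u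

/-- The letter `s` is an end of the word `u` if `u ≈ v·s` for some `v`. -/
def IsEnd (G : SimpleGraph V) (s : Letter G) (u : Word G) : Prop :=
  ∃ v, WEquiv G u (v ++ [s])

/-- `t` is the final segment of `u`: the commuting word consisting of all ends of `u`. -/
def IsFinalSegment (G : SimpleGraph V) (t u : Word G) : Prop :=
  IsCommuting G t ∧ ∀ s, s ∈ t ↔ IsEnd G s u

set_option linter.unusedSectionVars false
set_option linter.unreachableTactic false
set_option linter.unusedTactic false
set_option linter.unnecessarySeqFocus false
set_option maxHeartbeats 1000000

section Aux
variable {G : SimpleGraph V}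

lemma letter_nonempty (s : Letter G) : s.1.Nonempty := by
  have h := s.2
  have : (↑s.1 : Set V).Nonempty := by
    have := h.nonempty
    exact Set.nonempty_coe_sort.mp this
  exact_mod_cast this

lemma lcomm_symm {s t : Letter G} (h : LCommute G s t) : LCommute G t s := by
  simpa [LCommute, Finset.union_comm] using h

lemma lcomm_mono {r s t : Letter G} (hst : s.1 ⊆ t.1) (h : LCommute G r t) :
    LCommute G r s := by
  intro hc
  apply h
  have hset : (↑(r.1 ∪ t.1) : Set V) = ↑(r.1 ∪ s.1) ∪ (↑t.1 : Set V) := by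
    ext x
    simp only [Finset.coe_union, Set.mem_union, Finset.mem_coe]
    constructor
    · rintro (h1 | h1)
      · exact Or.inl (Or.inl h1)
      · exact Or.inr h1
    · rintro ((h1 | h1) | h1)
      · exact Or.inl h1
      · exact Or.inr (hst h1)
      · exact Or.inr h1
  unfold IsLetter
  rw [hset]
  apply SimpleGraph.induce_union_connected (SimpleGraph.Connected.preconnected hc) (SimpleGraph.Connected.preconnected t.2)
  obtain ⟨x, hx⟩ := letter_nonempty s
  refine ⟨x, ?_, ?_⟩
  · simp only [Finset.coe_union, Set.mem_union, Finset.mem_coe]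
    exact Or.inr hx
  · exact_mod_cast hst hx

lemma not_lcomm_of_subset {s t : Letter G} (h : s.1 ⊆ t.1) : ¬ LCommute G s t := by
  intro hc
  apply hc
  have : s.1 ∪ t.1 = t.1 := Finset.union_eq_right.mpr h
  rw [this]; exact t.2

lemma swapstep_symm {w w' : Word G} (h : LSwapStep G w w') : LSwapStep G w' w := by
  obtain ⟨a, b, s, t, hc, h1, h2⟩ := h
  exact ⟨a, b, t, s, lcomm_symm hc, h2, h1⟩

lemma wequiv_symm {u v : Word G} (h : WEquiv G u v) : WEquiv G v u :=
  by
  induction h with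
  | refl => exact Relation.ReflTransGen.refl
  | tail _ hs ih => exact Relation.ReflTransGen.head (swapstep_symm hs) ih

lemma wequiv_trans {u v w : Word G} (h : WEquiv G u v) (h' : WEquiv G v w) :
    WEquiv G u w := h.trans h'

lemma swapstep_length {u v : Word G} (h : LSwapStep G u v) : u.length = v.length := by
  obtain ⟨a, b, s, t, _, h1, h2⟩ := h
  subst h1 h2; simp

lemma wequiv_length {u v : Word G} (h : WEquiv G u v) : u.length = v.length := by
  induction h with
  | refl => rfl
  | tail _ hstep ih => exact ih.trans (swapstep_length hstep)


/-- occurrence `i` is absorbable with witness `j`. -/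
def AOIW (G : SimpleGraph V) (u : Word G) (i j : ℕ) : Prop :=
  i ≠ j ∧ ∃ s t : Letter G, u[i]? = some s ∧ u[j]? = some t ∧ s.1 ⊆ t.1 ∧
    ∀ m (r : Letter G), (i < m ∧ m < j ∨ j < m ∧ m < i) → u[m]? = some r → LCommute G s r

lemma AOIW_lt_length {u : Word G} {i j : ℕ} (h : AOIW G u i j) : i < u.length := by
  obtain ⟨_, s, t, hs, _⟩ := h
  rcases List.getElem?_eq_some_iff.mp hs with ⟨h, _⟩
  exact h

lemma AOIW_lt_length' {u : Word G} {i j : ℕ} (h : AOIW G u i j) : j < u.length := by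
  obtain ⟨_, s, t, _, ht, _⟩ := h
  rcases List.getElem?_eq_some_iff.mp ht with ⟨h, _⟩
  exact h

/-- getElem? at the junction point of an append. -/
lemma getElem?_mid (a b : Word G) (s : Letter G) : (a ++ s :: b)[a.length]? = some s := by
  rw [List.getElem?_append_right (le_refl _)]
  simp

lemma getElem?_mid' (a b : Word G) (s : Letter G) {n : ℕ} (hn : n = a.length) :
    (a ++ s :: b)[n]? = some s := by subst hn; exact getElem?_mid a b s

/-- decomposition of a word at two positions. -/
lemma two_split (u : Word G) {a b : ℕ} (hab : a < b) (hb : b < u.length)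
    {s t : Letter G} (hs : u[a]? = some s) (ht : u[b]? = some t) :
    ∃ A M B : Word G, u = A ++ s :: (M ++ t :: B) ∧ A.length = a ∧ M.length = b - a - 1 ∧
      u.eraseIdx a = A ++ (M ++ t :: B) ∧ u.eraseIdx b = A ++ s :: (M ++ B) ∧
      (∀ r ∈ M, ∃ m, a < m ∧ m < b ∧ u[m]? = some r) := by
  have ha : a < u.length := lt_trans hab hb
  obtain ⟨_, hsa⟩ := List.getElem?_eq_some_iff.mp hs
  obtain ⟨_, htb⟩ := List.getElem?_eq_some_iff.mp ht
  have hdropa : u.drop a = s :: u.drop (a+1) := by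
    rw [← List.getElem_cons_drop ha, hsa]
  have hdropb : u.drop b = t :: u.drop (b+1) := by
    rw [← List.getElem_cons_drop hb, htb]
  have hdrop2 : u.drop (a+1) = (u.drop (a+1)).take (b-a-1) ++ (t :: u.drop (b+1)) := by
    conv_lhs => rw [← List.take_append_drop (b-a-1) (u.drop (a+1))]
    rw [List.drop_drop]
    have h : a + 1 + (b - a - 1) = b := by omega
    rw [h, hdropb]
  have hMlen : ((u.drop (a+1)).take (b-a-1)).length = b - a - 1 := by
    simp only [List.length_take, List.length_drop]
    omega
  have hu : u = u.take a ++ s :: ((u.drop (a+1)).take (b-a-1) ++ (t :: u.drop (b+1))) := by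
    conv_lhs => rw [← List.take_append_drop a u]
    rw [hdropa, ← hdrop2]
  refine ⟨u.take a, (u.drop (a+1)).take (b - a - 1), u.drop (b+1), hu, ?_, hMlen, ?_, ?_, ?_⟩
  · simp [ha.le]
  · rw [List.eraseIdx_eq_take_drop_succ]
    conv_lhs => rw [hdrop2]
  · rw [List.eraseIdx_eq_take_drop_succ]
    have htake : u.take b = u.take a ++ s :: (u.drop (a+1)).take (b-a-1) := by
      have hlen : (u.take a ++ s :: (u.drop (a+1)).take (b-a-1)).length = b := by
        simp only [List.length_append, List.length_take, List.length_cons, List.length_drop]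
        omega
      have hassoc : u.take a ++ s :: ((u.drop (a+1)).take (b-a-1) ++ (t :: u.drop (b+1)))
          = (u.take a ++ s :: (u.drop (a+1)).take (b-a-1)) ++ (t :: u.drop (b+1)) := by
        simp
      conv_lhs => rw [hu, hassoc]
      rw [List.take_left' hlen]
    rw [htake]
    simp
  · intro r hr
    obtain ⟨n, hn, hrn⟩ := List.mem_iff_getElem.mp hr
    have hn' : n < b - a - 1 := by omega
    have h1 : ((u.drop (a+1)).take (b-a-1))[n] = u[a+1+n]'(by
        simp only [List.length_take, List.length_drop] at hn
        omega) := by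
      rw [List.getElem_take, List.getElem_drop]
    refine ⟨a+1+n, by omega, by omega, ?_⟩
    rw [List.getElem?_eq_getElem]
    rw [← h1, hrn]
    omega
end Aux

section Aux2
variable {G : SimpleGraph V}

lemma swap_across {s : Letter G} : ∀ (M : Word G), (∀ r ∈ M, LCommute G s r) → ∀ (A B : Word G),
    WEquiv G (A ++ s :: (M ++ B)) (A ++ (M ++ s :: B)) := by
  intro M
  induction M with
  | nil => intro _ A B; exact Relation.ReflTransGen.refl
  | cons r M ih =>
    intro hM A B
    have step : LSwapStep G (A ++ s :: (r :: M ++ B)) (A ++ r :: (s :: (M ++ B))) :=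
      ⟨A, M ++ B, s, r, hM r (by simp), by simp, by simp⟩
    have rest := ih (fun x hx => hM x (by simp [hx])) (A ++ [r]) B
    have e1 : A ++ [r] ++ s :: (M ++ B) = A ++ r :: (s :: (M ++ B)) := by simp
    have e2 : A ++ [r] ++ (M ++ s :: B) = A ++ (r :: M ++ s :: B) := by simp
    rw [e1, e2] at rest
    exact Relation.ReflTransGen.head step rest

lemma wequiv_nsred {u v : Word G} (h : WEquiv G u v) : Relation.ReflTransGen (NSStep G) u v :=
  Relation.ReflTransGen.mono (fun _ _ hs => Or.inl hs) _ _ h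

/-- an absorbable occurrence can be removed by NS steps. -/
lemma AOIW_steps {u : Word G} {i j : ℕ} (h : AOIW G u i j) :
    Relation.ReflTransGen (NSStep G) u (u.eraseIdx i) := by
  obtain ⟨hij, s, t, hs, ht, hst, hcomm⟩ := h
  rcases Nat.lt_or_ge i j with hlt | hge
  · obtain ⟨A, M, B, hu, hA, hM, he, _, hmem⟩ :=
      two_split u hlt (List.getElem?_eq_some_iff.mp ht).1 hs ht
    have hMc : ∀ r ∈ M, LCommute G s r := by
      intro r hr
      obtain ⟨m, h1, h2, h3⟩ := hmem r hr
      exact hcomm m r (Or.inl ⟨h1, h2⟩) h3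
    have hw : WEquiv G u (A ++ (M ++ s :: (t :: B))) := by
      rw [hu]; exact swap_across M hMc A (t :: B)
    have habs : AbsorbStep G (A ++ (M ++ s :: (t :: B))) (A ++ (M ++ t :: B)) :=
      ⟨A ++ M, B, s, t, hst, Or.inl (by simp), by simp⟩
    rw [he]
    exact (wequiv_nsred hw).tail (Or.inr habs)
  · have hlt : j < i := by omega
    obtain ⟨A, M, B, hu, hA, hM, _, he, hmem⟩ :=
      two_split u hlt (List.getElem?_eq_some_iff.mp hs).1 ht hs
    have hMc : ∀ r ∈ M, LCommute G s r := by
      intro r hr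
      obtain ⟨m, h1, h2, h3⟩ := hmem r hr
      exact hcomm m r (Or.inr ⟨h1, h2⟩) h3
    -- u = A ++ t :: (M ++ s :: B), move s left across M
    have hw : WEquiv G (A ++ t :: (s :: (M ++ B))) (A ++ t :: (M ++ s :: B)) := by
      have := swap_across M hMc (A ++ [t]) B
      simpa using this
    have habs : AbsorbStep G (A ++ t :: (s :: (M ++ B))) (A ++ t :: (M ++ B)) :=
      ⟨A, M ++ B, s, t, hst, Or.inr rfl, rfl⟩
    have main : Relation.ReflTransGen (NSStep G) u (A ++ t :: (M ++ B)) := by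
      rw [hu]
      exact (wequiv_nsred (wequiv_symm hw)).tail (Or.inr habs)
    rw [he]
    exact main
end Aux2

section Aux3
variable {G : SimpleGraph V}

lemma getElem?_between {a b c : Word G} {s t : Letter G} {m : ℕ} (h1 : a.length < m)
    (h2 : m < a.length + 1 + b.length) {r : Letter G}
    (hr : (a ++ s :: (b ++ t :: c))[m]? = some r) : r ∈ b := by
  rw [List.getElem?_append_right (by omega)] at hr
  obtain ⟨n, hn⟩ : ∃ n, m - a.length = n + 1 := ⟨m - a.length - 1, by omega⟩
  rw [hn, List.getElem?_cons_succ] at hr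
  rw [List.getElem?_append_left (by omega)] at hr
  obtain ⟨_, hb⟩ := List.getElem?_eq_some_iff.mp hr
  exact hb ▸ List.getElem_mem _

lemma AOIW_not_reduced {u : Word G} {i j : ℕ} (h : AOIW G u i j) : ¬ WIsReduced G u := by
  intro hred
  apply hred
  obtain ⟨hij, s, t, hs, ht, hst, hcomm⟩ := h
  rcases Nat.lt_or_ge i j with hlt | hge
  · obtain ⟨A, M, B, hu, hA, hM, _, _, hmem⟩ :=
      two_split u hlt (List.getElem?_eq_some_iff.mp ht).1 hs ht
    refine ⟨A, M, B, s, t, hu, Or.inl ⟨hst, fun r hr => ?_⟩⟩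
    obtain ⟨m, h1, h2, h3⟩ := hmem r hr
    exact hcomm m r (Or.inl ⟨h1, h2⟩) h3
  · have hlt : j < i := by omega
    obtain ⟨A, M, B, hu, hA, hM, _, _, hmem⟩ :=
      two_split u hlt (List.getElem?_eq_some_iff.mp hs).1 ht hs
    refine ⟨A, M, B, t, s, hu, Or.inr ⟨hst, fun r hr => ?_⟩⟩
    obtain ⟨m, h1, h2, h3⟩ := hmem r hr
    exact hcomm m r (Or.inr ⟨h1, h2⟩) h3

lemma not_reduced_AOIW {u : Word G} (h : ¬ WIsReduced G u) : ∃ i j, AOIW G u i j := by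
  rw [WIsReduced, not_not] at h
  obtain ⟨a, b, c, s, t, hu, hd⟩ := h
  have hassoc : a ++ s :: (b ++ t :: c) = (a ++ s :: b) ++ t :: c := by simp
  rcases hd with ⟨hst, hb⟩ | ⟨hts, hb⟩
  · refine ⟨a.length, a.length + 1 + b.length, by omega, s, t, ?_, ?_, hst, ?_⟩
    · rw [hu]; exact getElem?_mid a _ s
    · rw [hu, hassoc]
      exact getElem?_mid' _ _ t (by simp; omega)
    · intro m r hm hr
      have hm' : a.length < m ∧ m < a.length + 1 + b.length := by omega
      rw [hu] at hr
      exact hb r (getElem?_between hm'.1 hm'.2 hr)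
  · refine ⟨a.length + 1 + b.length, a.length, by omega, t, s, ?_, ?_, hts, ?_⟩
    · rw [hu, hassoc]
      exact getElem?_mid' _ _ t (by simp; omega)
    · rw [hu]; exact getElem?_mid a _ s
    · intro m r hm hr
      have hm' : a.length < m ∧ m < a.length + 1 + b.length := by omega
      rw [hu] at hr
      exact hb r (getElem?_between hm'.1 hm'.2 hr)

lemma absorb_AOIW {w w' : Word G} (h : AbsorbStep G w w') :
    ∃ i j, AOIW G w i j ∧ w' = w.eraseIdx i := by
  obtain ⟨a, b, s, t, hst, hw, hw'⟩ := h
  rcases hw with hw | hw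
  · subst hw
    refine ⟨a.length, a.length + 1, ⟨by omega, s, t, getElem?_mid a _ s, ?_, hst, ?_⟩, ?_⟩
    · rw [show a ++ s :: t :: b = (a ++ [s]) ++ t :: b by simp]
      exact getElem?_mid' _ _ t (by simp)
    · intro m r hm hr; omega
    · rw [hw', List.eraseIdx_append_of_length_le (le_refl _)]
      simp
  · subst hw
    refine ⟨a.length + 1, a.length, ⟨by omega, s, t, ?_, getElem?_mid a _ t, hst, ?_⟩, ?_⟩
    · rw [show a ++ t :: s :: b = (a ++ [t]) ++ s :: b by simp]
      exact getElem?_mid' _ _ s (by simp)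
    · intro m r hm hr; omega
    · rw [hw', List.eraseIdx_append_of_length_le (by omega)]
      simp
end Aux3

section Aux4
variable {G : SimpleGraph V}

def tr (p m : ℕ) : ℕ := if m = p then p+1 else if m = p+1 then p else m

lemma tr_spec (p n : ℕ) :
    (n = p ∧ tr p n = p+1) ∨ (n = p+1 ∧ tr p n = p) ∨ (n ≠ p ∧ n ≠ p+1 ∧ tr p n = n) := by
  unfold tr; split_ifs <;> omega

lemma swap_getElem? (c d : Word G) (x y : Letter G) (m : ℕ) :
    (c ++ y :: x :: d)[m]? = (c ++ x :: y :: d)[tr c.length m]? := by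
  rcases tr_spec c.length m with ⟨h1, h2⟩ | ⟨h1, h2⟩ | ⟨h1, h2, h3⟩
  · subst h1; rw [h2]
    rw [getElem?_mid c _ y]
    rw [show c ++ x :: y :: d = (c ++ [x]) ++ y :: d by simp]
    rw [getElem?_mid' _ _ y (by simp)]
  · subst h1; rw [h2]
    rw [show c ++ y :: x :: d = (c ++ [y]) ++ x :: d by simp]
    rw [getElem?_mid' _ _ x (by simp), getElem?_mid c _ x]
  · rw [h3]
    rcases Nat.lt_or_ge m c.length with hm | hm
    · rw [List.getElem?_append_left hm, List.getElem?_append_left hm]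
    · have hm2 : c.length + 2 ≤ m := by omega
      obtain ⟨n, hn⟩ : ∃ n, m - c.length = n + 2 := ⟨m - c.length - 2, by omega⟩
      rw [List.getElem?_append_right (by omega), List.getElem?_append_right (by omega), hn,
        List.getElem?_cons_succ, List.getElem?_cons_succ, List.getElem?_cons_succ,
        List.getElem?_cons_succ]

lemma K1 {u v : Word G} (hsw : LSwapStep G u v) {i j : ℕ} (h : AOIW G u i j) :
    ∃ i' j', AOIW G v i' j' ∧ WEquiv G (u.eraseIdx i) (v.eraseIdx i') := by
  obtain ⟨c, d, x, y, hxy, hu, hv⟩ := hsw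
  subst hu hv
  set p := c.length with hp
  obtain ⟨hij, s, t, hs, ht, hst, hcomm⟩ := h
  have hx : (c ++ x :: y :: d)[p]? = some x := getElem?_mid c _ x
  have hy : (c ++ x :: y :: d)[p+1]? = some y := by
    rw [show c ++ x :: y :: d = (c ++ [x]) ++ y :: d by simp]
    exact getElem?_mid' _ _ y (by simp [hp])
  have key : ∀ m : ℕ, (c ++ y :: x :: d)[m]? = (c ++ x :: y :: d)[tr p m]? :=
    swap_getElem? c d x y
  have trtr : ∀ n : ℕ, tr p (tr p n) = n := by
    intro n
    rcases tr_spec p n with ⟨h1, h2⟩ | ⟨h1, h2⟩ | ⟨h1, h2, h3⟩ <;>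
      rcases tr_spec p (tr p n) with ⟨g1, g2⟩ | ⟨g1, g2⟩ | ⟨g1, g2, g3⟩ <;> omega
  refine ⟨tr p i, tr p j, ⟨?_, s, t, ?_, ?_, hst, ?_⟩, ?_⟩
  · rcases tr_spec p i with ⟨h1, h2⟩ | ⟨h1, h2⟩ | ⟨h1, h2, h3⟩ <;>
      rcases tr_spec p j with ⟨g1, g2⟩ | ⟨g1, g2⟩ | ⟨g1, g2, g3⟩ <;> omega
  · rw [key (tr p i), trtr i]; exact hs
  · rw [key (tr p j), trtr j]; exact ht
  · intro m' r hm' hr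
    rw [key m'] at hr
    by_cases hbet : (i < tr p m' ∧ tr p m' < j) ∨ (j < tr p m' ∧ tr p m' < i)
    · exact hcomm (tr p m') r hbet hr
    · have hcases : (tr p m' = p ∧ i = p+1) ∨ (tr p m' = p+1 ∧ i = p) ∨
          (tr p m' = p ∧ j = p+1) ∨ (tr p m' = p+1 ∧ j = p) := by
        rcases tr_spec p i with ⟨h1, h2⟩ | ⟨h1, h2⟩ | ⟨h1, h2, h3⟩ <;>
          rcases tr_spec p j with ⟨g1, g2⟩ | ⟨g1, g2⟩ | ⟨g1, g2, g3⟩ <;>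
          rcases tr_spec p m' with ⟨f1, f2⟩ | ⟨f1, f2⟩ | ⟨f1, f2, f3⟩ <;> omega
      rcases hcases with ⟨e1, e2⟩ | ⟨e1, e2⟩ | ⟨e1, e2⟩ | ⟨e1, e2⟩
      · rw [e1, hx] at hr
        rw [e2, hy] at hs
        cases Option.some_inj.mp hr
        cases Option.some_inj.mp hs
        exact lcomm_symm hxy
      · rw [e1, hy] at hr
        rw [e2, hx] at hs
        cases Option.some_inj.mp hr
        cases Option.some_inj.mp hs
        exact hxy
      · rw [e1, hx] at hr
        rw [e2, hy] at ht
        cases Option.some_inj.mp hr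
        cases Option.some_inj.mp ht
        exact lcomm_symm (lcomm_mono hst hxy)
      · rw [e1, hy] at hr
        rw [e2, hx] at ht
        cases Option.some_inj.mp hr
        cases Option.some_inj.mp ht
        exact lcomm_symm (lcomm_mono hst (lcomm_symm hxy))
  · rcases tr_spec p i with ⟨h1, h2⟩ | ⟨h1, h2⟩ | ⟨h1, h2, h3⟩
    · rw [h1] at h2 ⊢
      rw [h2]
      rw [List.eraseIdx_append_of_length_le (le_refl p), List.eraseIdx_append_of_length_le (by omega)]
      simp [hp]
      exact Relation.ReflTransGen.refl
    · rw [h1] at h2 ⊢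
      rw [h2]
      rw [List.eraseIdx_append_of_length_le (by omega), List.eraseIdx_append_of_length_le (le_refl p)]
      simp [hp]
      exact Relation.ReflTransGen.refl
    · rw [h3]
      rcases Nat.lt_or_ge i p with hip | hip
      · rw [List.eraseIdx_append_of_lt_length (by omega) , List.eraseIdx_append_of_lt_length (by omega)]
        exact Relation.ReflTransGen.single ⟨c.eraseIdx i, d, x, y, hxy, rfl, rfl⟩
      · have hip2 : p + 2 ≤ i := by omega
        obtain ⟨n, hn⟩ : ∃ n, i - p = n + 2 := ⟨i - p - 2, by omega⟩
        rw [List.eraseIdx_append_of_length_le (by omega), List.eraseIdx_append_of_length_le (by omega), hn]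
        simp only [List.eraseIdx_cons_succ]
        exact Relation.ReflTransGen.single ⟨c, d.eraseIdx n, x, y, hxy, rfl, rfl⟩
end Aux4

section Aux5
variable {G : SimpleGraph V}

lemma transfer {u v : Word G} (h : WEquiv G u v) {i j : ℕ} (hA : AOIW G u i j) :
    ∃ i' j', AOIW G v i' j' ∧ WEquiv G (u.eraseIdx i) (v.eraseIdx i') := by
  induction h with
  | refl => exact ⟨i, j, hA, Relation.ReflTransGen.refl⟩
  | tail hab hstep ih =>
    obtain ⟨i', j', hA', hw⟩ := ih
    obtain ⟨i'', j'', hA'', hw'⟩ := K1 hstep hA'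
    exact ⟨i'', j'', hA'', hw.trans hw'⟩

def adj (i m : ℕ) : ℕ := if m < i then m else m - 1

lemma adj_spec (i n : ℕ) : (n < i ∧ adj i n = n) ∨ (i ≤ n ∧ adj i n = n - 1) := by
  unfold adj; split_ifs <;> omega

lemma erase_getElem?_adj (u : Word G) (i : ℕ) {n : ℕ} (h : n ≠ i) :
    (u.eraseIdx i)[adj i n]? = u[n]? := by
  unfold adj
  split_ifs with h'
  · exact List.getElem?_eraseIdx_of_lt h'
  · rw [List.getElem?_eraseIdx_of_ge (l := u) (i := i) (j := n-1) (by omega)]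
    congr 1
    omega

lemma erase_getElem?_lift (u : Word G) (i : ℕ) (m' : ℕ) :
    (u.eraseIdx i)[m']? = u[if m' < i then m' else m'+1]? := by
  split_ifs with h'
  · exact List.getElem?_eraseIdx_of_lt h'
  · exact List.getElem?_eraseIdx_of_ge (by omega)

lemma persistA {u : Word G} {k l i : ℕ} (h : AOIW G u k l) (hik : i ≠ k) (hil : i ≠ l) :
    AOIW G (u.eraseIdx i) (adj i k) (adj i l) := by
  obtain ⟨hkl, s, t, hs, ht, hst, hcomm⟩ := h
  refine ⟨?_, s, t, ?_, ?_, hst, ?_⟩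
  · rcases adj_spec i k with ⟨a1, a2⟩ | ⟨a1, a2⟩ <;> rcases adj_spec i l with ⟨b1, b2⟩ | ⟨b1, b2⟩ <;> omega
  · rw [erase_getElem?_adj u i (fun h => hik h.symm)]; exact hs
  · rw [erase_getElem?_adj u i (fun h => hil h.symm)]; exact ht
  · intro m' r hm' hr
    rw [erase_getElem?_lift u i m'] at hr
    set m := if m' < i then m' else m'+1 with hm
    have hmv : (m' < i ∧ m = m') ∨ (i ≤ m' ∧ m = m'+1) := by
      rw [hm]; split_ifs <;> omega
    apply hcomm m r _ hr
    rcases adj_spec i k with ⟨a1, a2⟩ | ⟨a1, a2⟩ <;> rcases adj_spec i l with ⟨b1, b2⟩ | ⟨b1, b2⟩ <;>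
      omega

lemma persistB {u : Word G} {a b c : ℕ} (h1 : AOIW G u a b) (h2 : AOIW G u b c) (hca : c ≠ a) :
    AOIW G (u.eraseIdx b) (adj b a) (adj b c) := by
  obtain ⟨hab, s, w, hs, hw, hsw, hcomm1⟩ := h1
  obtain ⟨hbc, w', t, hw', ht, hwt, hcomm2⟩ := h2
  rw [hw] at hw'
  cases Option.some_inj.mp hw'
  refine ⟨?_, s, t, ?_, ?_, hsw.trans hwt, ?_⟩
  · rcases adj_spec b a with ⟨a1, a2⟩ | ⟨a1, a2⟩ <;> rcases adj_spec b c with ⟨b1, b2⟩ | ⟨b1, b2⟩ <;> omega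
  · rw [erase_getElem?_adj u b hab]; exact hs
  · rw [erase_getElem?_adj u b (fun h => hbc h.symm)]; exact ht
  · intro m' r hm' hr
    rw [erase_getElem?_lift u b m'] at hr
    set m := if m' < b then m' else m'+1 with hm
    have hmv : (m' < b ∧ m = m') ∨ (b ≤ m' ∧ m = m'+1) := by
      rw [hm]; split_ifs <;> omega
    have hcase : (a < m ∧ m < b ∨ b < m ∧ m < a) ∨ (b < m ∧ m < c ∨ c < m ∧ m < b) := by
      rcases adj_spec b a with ⟨a1, a2⟩ | ⟨a1, a2⟩ <;> rcases adj_spec b c with ⟨b1, b2⟩ | ⟨b1, b2⟩ <;>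
        omega
    rcases hcase with hc | hc
    · exact hcomm1 m r hc hr
    · exact lcomm_symm (lcomm_mono hsw (lcomm_symm (hcomm2 m r hc hr)))

lemma mutual_case {u : Word G} {i k : ℕ} (hik : i < k) (h1 : AOIW G u i k) (h2 : AOIW G u k i) :
    WEquiv G (u.eraseIdx i) (u.eraseIdx k) := by
  obtain ⟨_, s, t, hs, ht, hst, hcomm1⟩ := h1
  obtain ⟨_, t', s', ht', hs', hts, _⟩ := h2
  rw [hs] at hs'; rw [ht] at ht'
  have e1 : s = s' := Option.some_inj.mp hs'
  have e2 : t = t' := Option.some_inj.mp ht'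
  have hts2 : t.1 ⊆ s.1 := by rw [e1, e2]; exact hts
  have hts' : s = t := Subtype.ext (Finset.Subset.antisymm hst hts2)
  obtain ⟨A, M, B, hu, hA, hM, he1, he2, hmem⟩ :=
    two_split u hik (List.getElem?_eq_some_iff.mp ht).1 hs ht
  have hMc : ∀ r ∈ M, LCommute G s r := by
    intro r hr
    obtain ⟨m, hm1, hm2, hm3⟩ := hmem r hr
    exact hcomm1 m r (Or.inl ⟨hm1, hm2⟩) hm3
  rw [he1, he2, ← hts']
  exact wequiv_symm (swap_across M hMc A B)

lemma erase_erase {u : Word G} {i k : ℕ} (hik : i < k) :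
    (u.eraseIdx i).eraseIdx (k-1) = (u.eraseIdx k).eraseIdx i := by
  apply List.ext_getElem?
  intro n
  simp only [List.getElem?_eraseIdx]
  split_ifs <;> first | rfl | (congr 1; omega) | omega

lemma K2 {u : Word G} {i j k l : ℕ} (h1 : AOIW G u i j) (h2 : AOIW G u k l) (hik : i ≠ k) :
    WEquiv G (u.eraseIdx i) (u.eraseIdx k) ∨
    ∃ k' l' i' j', AOIW G (u.eraseIdx i) k' l' ∧ AOIW G (u.eraseIdx k) i' j' ∧
      (u.eraseIdx i).eraseIdx k' = (u.eraseIdx k).eraseIdx i' := by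
  have heq : (u.eraseIdx i).eraseIdx (adj i k) = (u.eraseIdx k).eraseIdx (adj k i) := by
    rcases Nat.lt_or_ge i k with h | h
    · rw [show adj i k = k - 1 by unfold adj; split_ifs <;> omega,
        show adj k i = i by unfold adj; split_ifs <;> omega]
      exact erase_erase h
    · have h' : k < i := by omega
      rw [show adj i k = k by unfold adj; split_ifs <;> omega,
        show adj k i = i - 1 by unfold adj; split_ifs <;> omega]
      exact (erase_erase h').symm
  by_cases hli : l = i
  · by_cases hjk : j = k
    · rw [hjk] at h1
      rw [hli] at h2
      rcases Nat.lt_or_ge i k with h | h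
      · exact Or.inl (mutual_case h h1 h2)
      · exact Or.inl (wequiv_symm (mutual_case (by omega) h2 h1))
    · right
      rw [hli] at h2
      exact ⟨adj i k, adj i j, adj k i, adj k j,
        persistB h2 h1 hjk, persistA h1 (Ne.symm hik) (fun h => hjk h.symm), heq⟩
  · by_cases hjk : j = k
    · right
      rw [hjk] at h1
      exact ⟨adj i k, adj i l, adj k i, adj k l,
        persistA h2 hik (fun h => hli h.symm), persistB h1 h2 hli, heq⟩
    · right
      exact ⟨adj i k, adj i l, adj k i, adj k j,
        persistA h2 hik (fun h => hli h.symm), persistA h1 (Ne.symm hik) (fun h => hjk h.symm), heq⟩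
end Aux5

section Aux6
variable {G : SimpleGraph V}

def TStep (G : SimpleGraph V) (u v : Word G) : Prop :=
  ∃ (w : Word G) (i j : ℕ), WEquiv G u w ∧ AOIW G w i j ∧ v = w.eraseIdx i

lemma tstep_sat {u u' v : Word G} (h : WEquiv G u u') (ht : TStep G u' v) : TStep G u v := by
  obtain ⟨w, i, j, hw, hA, hv⟩ := ht
  exact ⟨w, i, j, h.trans hw, hA, hv⟩

lemma tstep_length {u v : Word G} (h : TStep G u v) : v.length + 1 = u.length := by
  obtain ⟨w, i, j, hw, hA, hv⟩ := h
  have hi := AOIW_lt_length hA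
  have hl := wequiv_length hw
  rw [hv, List.length_eraseIdx, if_pos hi]
  omega

lemma tstep_diamond {u v1 v2 : Word G} (h1 : TStep G u v1) (h2 : TStep G u v2) :
    WEquiv G v1 v2 ∨ ∃ z1 z2, TStep G v1 z1 ∧ TStep G v2 z2 ∧ WEquiv G z1 z2 := by
  obtain ⟨w1, i1, j1, hw1, hA1, hv1⟩ := h1
  obtain ⟨w2, i2, j2, hw2, hA2, hv2⟩ := h2
  have h12 : WEquiv G w2 w1 := (wequiv_symm hw2).trans hw1
  obtain ⟨i2', j2', hA2', hwe⟩ := transfer h12 hA2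
  by_cases hii : i1 = i2'
  · left
    rw [hv1, hv2, hii]
    exact wequiv_symm hwe
  · rcases K2 hA1 hA2' hii with hc | ⟨k', l', i', j', hB1, hB2, heqq⟩
    · left
      rw [hv1, hv2]
      exact hc.trans (wequiv_symm hwe)
    · right
      refine ⟨(w1.eraseIdx i1).eraseIdx k', (w1.eraseIdx i2').eraseIdx i', ?_, ?_, ?_⟩
      · exact ⟨w1.eraseIdx i1, k', l', by rw [hv1]; exact Relation.ReflTransGen.refl, hB1, rfl⟩
      · refine ⟨w1.eraseIdx i2', i', j', ?_, hB2, rfl⟩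
        rw [hv2]; exact hwe
      · rw [heqq]
        exact Relation.ReflTransGen.refl

lemma reduced_no_tstep {v z : Word G} (hred : WIsReduced G v) : ¬ TStep G v z := by
  rintro ⟨w, i, j, hw, hA, hz⟩
  obtain ⟨i', j', hA', _⟩ := transfer (wequiv_symm hw) hA
  exact AOIW_not_reduced hA' hred

lemma reduced_equiv {vone vtwo : Word G} (h : WEquiv G vone vtwo) (hred : WIsReduced G vone) :
    WIsReduced G vtwo := by
  by_contra hc
  obtain ⟨i, j, hA⟩ := not_reduced_AOIW hc
  obtain ⟨i', j', hA', _⟩ := transfer (wequiv_symm h) hA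
  exact AOIW_not_reduced hA' hred

lemma reduced_chain {a v : Word G} (h : Relation.ReflTransGen (TStep G) a v)
    (hred : WIsReduced G a) : v = a := by
  rcases Relation.ReflTransGen.cases_head h with rfl | ⟨x, hx, _⟩
  · rfl
  · exact absurd hx (reduced_no_tstep hred)

lemma tstep_normalize : ∀ n (u : Word G), u.length ≤ n →
    ∃ v, Relation.ReflTransGen (TStep G) u v ∧ WIsReduced G v := by
  intro n
  induction n with
  | zero =>
    intro u hu
    by_cases h : WIsReduced G u
    · exact ⟨u, Relation.ReflTransGen.refl, h⟩
    · obtain ⟨i, j, hA⟩ := not_reduced_AOIW h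
      have := AOIW_lt_length hA; omega
  | succ n ih =>
    intro u hu
    by_cases h : WIsReduced G u
    · exact ⟨u, Relation.ReflTransGen.refl, h⟩
    · obtain ⟨i, j, hA⟩ := not_reduced_AOIW h
      have hi := AOIW_lt_length hA
      obtain ⟨v, hc, hred⟩ := ih (u.eraseIdx i)
        (by rw [List.length_eraseIdx, if_pos hi]; omega)
      exact ⟨v, Relation.ReflTransGen.head ⟨u, i, j, Relation.ReflTransGen.refl, hA, rfl⟩ hc, hred⟩

lemma newman : ∀ n, ∀ u v v' : Word G, u.length ≤ n →
    Relation.ReflTransGen (TStep G) u v → Relation.ReflTransGen (TStep G) u v' →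
    WIsReduced G v → WIsReduced G v' → WEquiv G v v' := by
  intro n
  induction n with
  | zero =>
    intro u v v' hn c1 c2 hv hv'
    rcases Relation.ReflTransGen.cases_head c1 with rfl | ⟨x1, hx1, _⟩
    · rcases Relation.ReflTransGen.cases_head c2 with rfl | ⟨x2, hx2, _⟩
      · exact Relation.ReflTransGen.refl
      · have := tstep_length hx2; omega
    · have := tstep_length hx1; omega
  | succ n ih =>
    intro u v v' hn c1 c2 hv hv'
    rcases Relation.ReflTransGen.cases_head c1 with rfl | ⟨x1, hx1, hc1⟩
    · rw [reduced_chain c2 hv]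
      exact Relation.ReflTransGen.refl
    · rcases Relation.ReflTransGen.cases_head c2 with rfl | ⟨x2, hx2, hc2⟩
      · exact absurd hx1 (reduced_no_tstep hv')
      · have hlx1 : x1.length ≤ n := by have := tstep_length hx1; omega
        have hlx2 : x2.length ≤ n := by have := tstep_length hx2; omega
        rcases tstep_diamond hx1 hx2 with he | ⟨z1, z2, hz1, hz2, hz12⟩
        · rcases Relation.ReflTransGen.cases_head hc2 with rfl | ⟨y, hy, hcy⟩
          · have hx1red : WIsReduced G x1 := reduced_equiv (wequiv_symm he) hv'
            rw [reduced_chain hc1 hx1red]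
            exact he
          · exact ih x1 v v' hlx1 hc1 (Relation.ReflTransGen.head (tstep_sat he hy) hcy) hv hv'
        · obtain ⟨nf1, hnfc, hnfred⟩ := tstep_normalize z1.length z1 le_rfl
          have hv_nf : WEquiv G v nf1 :=
            ih x1 v nf1 hlx1 hc1 (Relation.ReflTransGen.head hz1 hnfc) hv hnfred
          rcases Relation.ReflTransGen.cases_head hnfc with rfl | ⟨y, hy, hcy⟩
          · have z2red : WIsReduced G z2 := reduced_equiv hz12 hnfred
            have hvz2 : WEquiv G v' z2 :=
              ih x2 v' z2 hlx2 hc2 (Relation.ReflTransGen.single hz2) hv' z2red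
            exact hv_nf.trans (hz12.trans (wequiv_symm hvz2))
          · have hy2 : TStep G z2 y := tstep_sat (wequiv_symm hz12) hy
            have hvnf' : WEquiv G v' nf1 :=
              ih x2 v' nf1 hlx2 hc2
                (Relation.ReflTransGen.head hz2 (Relation.ReflTransGen.head hy2 hcy)) hv' hnfred
            exact hv_nf.trans (wequiv_symm hvnf')

lemma nssteps_tsteps {u v : Word G} (h : Relation.ReflTransGen (NSStep G) u v) :
    ∃ v₀, Relation.ReflTransGen (TStep G) u v₀ ∧ WEquiv G v₀ v := by
  induction h with
  | refl => exact ⟨u, Relation.ReflTransGen.refl, Relation.ReflTransGen.refl⟩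
  | @tail b c hab hstep ih =>
    obtain ⟨v₀, hc, hw⟩ := ih
    rcases hstep with hsw | habs
    · exact ⟨v₀, hc, hw.tail hsw⟩
    · obtain ⟨i, j, hA, he⟩ := absorb_AOIW habs
      exact ⟨c, hc.tail ⟨b, i, j, hw, hA, he⟩, Relation.ReflTransGen.refl⟩

lemma ns_exists : ∀ n (u : Word G), u.length ≤ n → ∃ v, NSRed G u v := by
  intro n
  induction n with
  | zero =>
    intro u hu
    by_cases h : WIsReduced G u
    · exact ⟨u, Relation.ReflTransGen.refl, h⟩
    · obtain ⟨i, j, hA⟩ := not_reduced_AOIW h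
      have := AOIW_lt_length hA; omega
  | succ n ih =>
    intro u hu
    by_cases h : WIsReduced G u
    · exact ⟨u, Relation.ReflTransGen.refl, h⟩
    · obtain ⟨i, j, hA⟩ := not_reduced_AOIW h
      have hi := AOIW_lt_length hA
      obtain ⟨v, hc, hred⟩ := ih (u.eraseIdx i)
        (by rw [List.length_eraseIdx, if_pos hi]; omega)
      exact ⟨v, (AOIW_steps hA).trans hc, hred⟩

end Aux6


/-- Every word admits exactly one non-splitting reduction, up to permutation of
adjacent commuting letters. -/
theorem nonsplitting_reduction_exists_unique (G : SimpleGraph V) (u : Word G) :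
    ∃ v, NSRed G u v ∧ ∀ v', NSRed G u v' → WEquiv G v v' := by
  obtain ⟨v, hv⟩ := ns_exists u.length u le_rfl
  refine ⟨v, hv, ?_⟩
  intro v' hv'
  obtain ⟨v₀, hc, hw⟩ := nssteps_tsteps hv.1
  obtain ⟨v₀', hc', hw'⟩ := nssteps_tsteps hv'.1
  have h0 : WIsReduced G v₀ := reduced_equiv (wequiv_symm hw) hv.2
  have h0' : WIsReduced G v₀' := reduced_equiv (wequiv_symm hw') hv'.2
  have hmain := newman u.length u v₀ v₀' le_rfl hc hc' h0 h0'
  exact (wequiv_symm hw).trans (hmain.trans hw')
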